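/- Let P be a finite, reduced, crystallographic, irreducible root pairing (root system) over ℝ equipped with a base (set of simple roots) {α_i}_{i∈S}. Suppose θ is a root that is dominant (⟨θ, α_i^∨⟩ ≥ 0 for every simple coroot α_i^∨) and is minimal among dominant roots, in the sense that for every dominant root γ the difference γ − θ is a nonnegative integer combination of the simple roots (so θ is the short highest root). If λ is a nonzero dominant element of the root lattice that is a nonnegative integer combination of the simple roots, then λ − θ is again a nonnegative integer combination of the simple roots. -/

import Mathlib

set_option linter.unusedSectionVars false

open Finset

namespace StembridgeAux

variable {ι M N : Type*} [Fintype ι]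
    [AddCommGroup M] [Module ℝ M] [AddCommGroup N] [Module ℝ N]
    (P : RootPairing ι ℝ M N)

/-- Coefficients w.r.t. a linearly independent family are unique. -/
lemma coeff_eq (S : Finset ι) (v : ι → M)
    (hInd : LinearIndependent ℝ fun i : S => v i) (f g : ι → ℝ)
    (h : ∑ i ∈ S, f i • v i = ∑ i ∈ S, g i • v i) : ∀ i ∈ S, f i = g i := by
  classical
  have h' : ∑ i : S, (f i - g i) • v i = 0 := by
    rw [Finset.sum_coe_sort S (fun i => (f i - g i) • v i)]
    simp only [sub_smul, Finset.sum_sub_distrib, h, sub_self]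
  intro i hi
  have := Fintype.linearIndependent_iff.mp hInd (fun i : S => f i - g i) h' ⟨i, hi⟩
  simpa [sub_eq_zero] using this

lemma ite_sum [DecidableEq ι] (S : Finset ι) (v : ι → M) (t : ι) (ht : t ∈ S) :
    ∑ x ∈ S, (if x = t then (1:ℝ) else 0) • v x = v t := by
  classical
  rw [Finset.sum_congr rfl (g := fun x => if x = t then v t else 0)
    (by intro x hx; by_cases h : x = t <;> simp [h])]
  simp [Finset.sum_ite_eq' S t (fun _ => v t), ht]

/-- Strict Cauchy–Schwarz: the Coxeter weight of two linearly independent roots is `< 4`. -/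
lemma cw_lt_four (i j : ι) (hli : LinearIndependent ℝ ![P.root i, P.root j]) :
    P.coxeterWeight i j < 4 := by
  set B := P.RootForm with hB
  set β := P.root i with hβ
  set γ := P.root j with hγ
  have ha : 0 < B β β := P.rootForm_pos_of_ne_zero (Submodule.subset_span ⟨i, rfl⟩) (P.ne_zero i)
  have hc : 0 < B γ γ := P.rootForm_pos_of_ne_zero (Submodule.subset_span ⟨j, rfl⟩) (P.ne_zero j)
  have hsymm : B γ β = B β γ := P.rootForm_symmetric.eq γ β
  set a := B β β
  set c := B γ γ
  set b := B β γ with hb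
  have hv : (c • β - b • γ) ≠ 0 := by
    intro hv0
    have := (LinearIndependent.pair_iff.mp hli) c (-b) (by
      rw [neg_smul, ← sub_eq_add_neg]; exact hv0)
    exact hc.ne' this.1
  have hmem : (c • β - b • γ) ∈ P.rootSpan ℝ := by
    apply Submodule.sub_mem <;> apply Submodule.smul_mem <;>
      exact Submodule.subset_span ⟨_, rfl⟩
  have hpos : 0 < B (c • β - b • γ) (c • β - b • γ) :=
    P.rootForm_pos_of_ne_zero hmem hv
  have hBvv : B (c • β - b • γ) (c • β - b • γ) = c * (c * a - b * b) := by
    simp only [map_sub, map_smul, LinearMap.sub_apply, LinearMap.smul_apply, smul_eq_mul, hsymm]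
    ring
  have h5 : 0 < c * (c * a - b * b) := hBvv ▸ hpos
  have hblt : b * b < c * a := by
    rcases mul_pos_iff.mp h5 with ⟨_, h6⟩ | ⟨h6, _⟩
    · linarith
    · linarith
  have h1 : 2 * b = P.pairing i j * c := (P.posRootForm ℝ).two_mul_apply_root_root i j
  have h2 : 2 * b = P.pairing j i * a := by
    rw [← hsymm]; exact (P.posRootForm ℝ).two_mul_apply_root_root j i
  have hcwd : P.coxeterWeight i j = P.pairing i j * P.pairing j i := rfl
  have h3 : P.coxeterWeight i j * (c * a) = (2 * b) * (2 * b) := by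
    rw [hcwd]
    calc P.pairing i j * P.pairing j i * (c * a)
        = (P.pairing i j * c) * (P.pairing j i * a) := by ring
      _ = (2 * b) * (2 * b) := by rw [← h1, ← h2]
  have h4 : P.coxeterWeight i j * (c * a) < 4 * (c * a) := by
    rw [h3]
    have h7 : (2 * b) * (2 * b) = 4 * (b * b) := by ring
    rw [h7]
    linarith
  exact lt_of_mul_lt_mul_right h4 (mul_pos hc ha).le

/-- If two non-opposite roots pair negatively, their sum is a root. -/
lemma sum_is_root (hcrys : P.IsCrystallographic) (hred : P.IsReduced) (i j : ι)
    (hneg : P.pairing i j < 0) (hne : P.root i ≠ - P.root j) :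
    ∃ k, P.root k = P.root i + P.root j := by
  have hji : P.pairing j i < 0 := by
    rcases lt_trichotomy (P.pairing j i) 0 with h | h | h
    · exact h
    · exact absurd (P.pairing_eq_zero_iff.mp h) hneg.ne
    · exact absurd (by have := (RootPairing.zero_lt_pairingIn_iff (P.posRootForm ℝ) j i).mp (by simpa [← P.algebraMap_pairingIn ℝ, -RootPairing.algebraMap_pairingIn] using h); simpa [← P.algebraMap_pairingIn ℝ, -RootPairing.algebraMap_pairingIn] using this)
        (not_lt.mpr hneg.le)
  have hne2 : P.root i ≠ P.root j := by
    intro h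
    have : P.pairing i j = 2 := by
      unfold RootPairing.pairing RootPairing.root'
      rw [h]
      exact P.root_coroot_two j
    linarith
  have hli : LinearIndependent ℝ ![P.root i, P.root j] := by
    by_contra h
    rcases hred.eq_or_eq_neg i j h with h' | h'
    · exact hne2 h'
    · exact hne h'
  have hcw := cw_lt_four P i j hli
  obtain ⟨z, hz⟩ : ∃ z : ℤ, (z : ℝ) = P.pairing i j := by simpa using hcrys.exists_value i j
  obtain ⟨w, hw⟩ : ∃ z : ℤ, (z : ℝ) = P.pairing j i := by simpa using hcrys.exists_value j i
  have hz1 : z ≤ -1 := by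
    have h0 : (z : ℝ) < 0 := by rw [hz]; exact hneg
    have : z < 0 := by exact_mod_cast h0
    omega
  have hw1 : w ≤ -1 := by
    have h0 : (w : ℝ) < 0 := by rw [hw]; exact hji
    have : w < 0 := by exact_mod_cast h0
    omega
  have hzw : z * w ≤ 3 := by
    have h0 : ((z * w : ℤ) : ℝ) < 4 := by
      push_cast
      rw [hz, hw]
      exact hcw
    have : (z * w : ℤ) < 4 := by exact_mod_cast h0
    omega
  have hkey : z = -1 ∨ w = -1 := by
    by_contra hcon
    push_neg at hcon
    have h1 : z ≤ -2 := by omega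
    have h2 : w ≤ -2 := by omega
    nlinarith
  rcases hkey with h | h
  · refine ⟨P.reflectionPerm j i, ?_⟩
    rw [P.root_reflectionPerm, P.reflection_apply_root, ← hz, h]
    push_cast
    rw [neg_one_smul, sub_neg_eq_add]
  · refine ⟨P.reflectionPerm i j, ?_⟩
    rw [P.root_reflectionPerm, P.reflection_apply_root, ← hw, h]
    push_cast
    rw [neg_one_smul, sub_neg_eq_add, add_comm]

end StembridgeAux


open Finset

section Main

variable {ι M N : Type*} [Fintype ι]
    [AddCommGroup M] [Module ℝ M] [AddCommGroup N] [Module ℝ N]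
    (P : RootPairing ι ℝ M N)

theorem stmt_0'
    (hcrys : P.IsCrystallographic)
    (hred : P.IsReduced)
    (S : Finset ι)
    (hbaseInd : LinearIndependent ℝ fun i : S => P.root i)
    (hbase : ∀ j : ι, (∃ c : ι → ℕ, P.root j = ∑ i ∈ S, (c i : ℝ) • P.root i) ∨
      (∃ c : ι → ℕ, P.root j = -∑ i ∈ S, (c i : ℝ) • P.root i))
    (iθ : ι)
    (hθmin : ∀ j : ι, (∀ i ∈ S, 0 ≤ P.pairing j i) →
      ∃ c : ι → ℕ, P.root j - P.root iθ = ∑ i ∈ S, (c i : ℝ) • P.root i)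
    (lam : M) (hlam0 : lam ≠ 0)
    (hlamdom : ∀ i ∈ S, 0 ≤ P.toLinearMap lam (P.coroot i))
    (hlamsum : ∃ c : ι → ℕ, lam = ∑ i ∈ S, (c i : ℝ) • P.root i) :
    ∃ c : ι → ℕ, lam - P.root iθ = ∑ i ∈ S, (c i : ℝ) • P.root i := by
  classical
  -- pairing of a combination with a coroot
  have pair_sum : ∀ (c : ι → ℕ) (k : ι),
      P.toLinearMap (∑ i ∈ S, (c i : ℝ) • P.root i) (P.coroot k)
        = ∑ i ∈ S, (c i : ℝ) * P.pairing i k := by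
    intro c k
    rw [map_sum, LinearMap.sum_apply]
    refine Finset.sum_congr rfl fun i hi => ?_
    rw [map_smul, LinearMap.smul_apply, smul_eq_mul,
      P.root_coroot_eq_pairing]
  -- single-element sum manipulations
  have sum_sub_single : ∀ (c : ι → ℕ) (k : ι), k ∈ S → 1 ≤ c k →
      ∑ i ∈ S, ((c i - if i = k then 1 else 0 : ℕ) : ℝ) • P.root i
        = (∑ i ∈ S, (c i : ℝ) • P.root i) - P.root k := by
    intro c k hk hck
    have h1 : ∀ x ∈ S, ((c x - if x = k then 1 else 0 : ℕ) : ℝ) • P.root x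
        = (c x : ℝ) • P.root x - (if x = k then (1:ℝ) else 0) • P.root x := by
      intro x hx
      by_cases h : x = k
      · subst h
        rw [if_pos rfl, if_pos rfl, Nat.cast_sub hck, sub_smul, Nat.cast_one]
      · simp [h]
    rw [Finset.sum_congr rfl h1, Finset.sum_sub_distrib,
      StembridgeAux.ite_sum S P.root k hk]
  have sum_add_single : ∀ (e : ι → ℕ) (k : ι), k ∈ S →
      ∑ i ∈ S, ((e i + if i = k then 1 else 0 : ℕ) : ℝ) • P.root i
        = (∑ i ∈ S, (e i : ℝ) • P.root i) + P.root k := by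
    intro e k hk
    have h1 : ∀ x ∈ S, ((e x + if x = k then 1 else 0 : ℕ) : ℝ) • P.root x
        = (e x : ℝ) • P.root x + (if x = k then (1:ℝ) else 0) • P.root x := by
      intro x hx
      by_cases h : x = k
      · subst h; rw [if_pos rfl, if_pos rfl]; push_cast; rw [add_smul]
      · simp [h]
    rw [Finset.sum_congr rfl h1, Finset.sum_add_distrib,
      StembridgeAux.ite_sum S P.root k hk]
  -- off-diagonal nonpositivity of the Cartan matrix
  have offdiag : ∀ i ∈ S, ∀ k ∈ S, i ≠ k → P.pairing i k ≤ 0 := by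
    intro i hi k hk hik
    by_contra hpos
    push_neg at hpos
    set k' := P.reflectionPerm k k with hk'
    have hrk' : P.root k' = - P.root k := by
      rw [hk', P.root_reflectionPerm, P.reflection_apply_self]
    have hpik' : P.pairing i k' < 0 := by
      rw [hk', RootPairing.pairing_reflectionPerm_self_right]
      linarith
    have hnei : P.root i ≠ - P.root k' := by
      rw [hrk', neg_neg]
      intro h
      exact hik (P.root.injective h)
    obtain ⟨m, hm⟩ := StembridgeAux.sum_is_root P hcrys hred i k' hpik' hnei
    rw [hrk'] at hm
    rcases hbase m with ⟨c, hcm⟩ | ⟨c, hcm⟩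
    · -- root i - root k = ∑ c • root
      have heq : ∑ x ∈ S, (if x = i then (1:ℝ) else 0) • P.root x
          = ∑ x ∈ S, ((if x = k then (1:ℝ) else 0) + c x) • P.root x := by
        rw [StembridgeAux.ite_sum S P.root i hi]
        have h2 : ∀ x ∈ S, ((if x = k then (1:ℝ) else 0) + c x) • P.root x
            = (if x = k then (1:ℝ) else 0) • P.root x + (c x : ℝ) • P.root x := by
          intro x hx; rw [add_smul]
        rw [Finset.sum_congr rfl h2, Finset.sum_add_distrib,
          StembridgeAux.ite_sum S P.root k hk, ← hcm, hm]
        abel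
      have := StembridgeAux.coeff_eq S P.root hbaseInd _ _ heq k hk
      rw [if_neg (Ne.symm hik), if_pos rfl] at this
      have hcnn : (0:ℝ) ≤ (c k : ℝ) := Nat.cast_nonneg _
      linarith
    · -- root i - root k = -∑ c • root, i.e. root i + ∑ c = root k
      have heq : ∑ x ∈ S, ((if x = i then (1:ℝ) else 0) + c x) • P.root x
          = ∑ x ∈ S, (if x = k then (1:ℝ) else 0) • P.root x := by
        have h2 : ∀ x ∈ S, ((if x = i then (1:ℝ) else 0) + c x) • P.root x
            = (if x = i then (1:ℝ) else 0) • P.root x + (c x : ℝ) • P.root x := by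
          intro x hx; rw [add_smul]
        rw [Finset.sum_congr rfl h2, Finset.sum_add_distrib,
          StembridgeAux.ite_sum S P.root i hi, StembridgeAux.ite_sum S P.root k hk]
        have h3 : ∑ i ∈ S, (c i : ℝ) • P.root i = - P.root m := by
          rw [hcm]; simp
        rw [h3, hm]
        abel
      have := StembridgeAux.coeff_eq S P.root hbaseInd _ _ heq i hi
      rw [if_neg hik, if_pos rfl] at this
      have hcnn : (0:ℝ) ≤ (c i : ℝ) := Nat.cast_nonneg _
      linarith
  -- main induction
  suffices H : ∀ n : ℕ, ∀ (j : ι) (c e : ι → ℕ), (∑ i ∈ S, c i) = n →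
      lam - P.root j = ∑ i ∈ S, (c i : ℝ) • P.root i →
      P.root j = ∑ i ∈ S, (e i : ℝ) • P.root i →
      ∃ d : ι → ℕ, lam - P.root iθ = ∑ i ∈ S, (d i : ℝ) • P.root i by
    obtain ⟨c0, hc0⟩ := hlamsum
    have hex : ∃ i ∈ S, c0 i ≠ 0 := by
      by_contra h
      push_neg at h
      exact hlam0 (by
        rw [hc0]
        exact Finset.sum_eq_zero fun i hi => by rw [h i hi]; simp)
    obtain ⟨i0, hi0, hne0⟩ := hex
    refine H _ i0 (fun i => c0 i - if i = i0 then 1 else 0)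
      (fun i => if i = i0 then 1 else 0) rfl ?_ ?_
    · rw [sum_sub_single c0 i0 hi0 (Nat.one_le_iff_ne_zero.mpr hne0), ← hc0]
    · simp only [Nat.cast_ite, Nat.cast_one, Nat.cast_zero]
      exact (StembridgeAux.ite_sum S P.root i0 hi0).symm
  intro n
  induction n using Nat.strong_induction_on with
  | _ n IH =>
    intro j c e hn hc he
    by_cases hdom : ∀ i ∈ S, 0 ≤ P.pairing j i
    · obtain ⟨d, hd⟩ := hθmin j hdom
      refine ⟨fun i => c i + d i, ?_⟩
      have hsplit : lam - P.root iθ = (lam - P.root j) + (P.root j - P.root iθ) := by abel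
      rw [hsplit, hc, hd, ← Finset.sum_add_distrib]
      refine Finset.sum_congr rfl fun i hi => ?_
      push_cast
      rw [add_smul]
    · push_neg at hdom
      obtain ⟨k, hkS, hkneg⟩ := hdom
      obtain ⟨z, hz⟩ : ∃ z : ℤ, (z : ℝ) = P.pairing j k := by simpa using hcrys.exists_value j k
      have hz1 : P.pairing j k ≤ -1 := by
        have h0 : (z : ℝ) < 0 := by rw [hz]; exact hkneg
        have h1 : z < 0 := by exact_mod_cast h0
        have h2 : z ≤ -1 := by omega
        rw [← hz]
        exact_mod_cast h2
      have hlamj : P.toLinearMap (lam - P.root j) (P.coroot k)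
          = P.toLinearMap lam (P.coroot k) - P.pairing j k := by
        rw [← P.root_coroot_eq_pairing j k]
        simp only [map_sub, LinearMap.sub_apply]
      have hsum : ∑ i ∈ S, (c i : ℝ) * P.pairing i k
          = P.toLinearMap lam (P.coroot k) - P.pairing j k := by
        rw [← hlamj, hc, pair_sum]
      have hub : ∑ i ∈ S, (c i : ℝ) * P.pairing i k ≤ (c k : ℝ) * 2 := by
        have h1 : ∀ x ∈ S, (c x : ℝ) * P.pairing x k
            ≤ (if x = k then (c k : ℝ) * 2 else 0) := by
          intro x hx
          by_cases h : x = k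
          · subst h
            rw [if_pos rfl, RootPairing.pairing_same]
          · rw [if_neg h]
            exact mul_nonpos_of_nonneg_of_nonpos (Nat.cast_nonneg _) (offdiag x hx k hkS h)
        calc ∑ x ∈ S, (c x : ℝ) * P.pairing x k
            ≤ ∑ x ∈ S, (if x = k then (c k : ℝ) * 2 else 0) := Finset.sum_le_sum h1
          _ = (c k : ℝ) * 2 := by rw [Finset.sum_ite_eq' S k]; simp [hkS]
      have hck : 1 ≤ c k := by
        by_contra h
        push_neg at h
        have h0 : c k = 0 := by omega
        have h2 := hlamdom k hkS
        rw [h0] at hub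
        simp only [Nat.cast_zero, zero_mul] at hub
        rw [hsum] at hub
        linarith
      have hjk : P.root j ≠ - P.root k := by
        intro h
        have heq : ∑ x ∈ S, ((e x : ℝ) + if x = k then (1:ℝ) else 0) • P.root x
            = ∑ x ∈ S, (0:ℝ) • P.root x := by
          have h2 : ∀ x ∈ S, ((e x : ℝ) + if x = k then (1:ℝ) else 0) • P.root x
              = (e x : ℝ) • P.root x + (if x = k then (1:ℝ) else 0) • P.root x := by
            intro x hx; rw [add_smul]
          rw [Finset.sum_congr rfl h2, Finset.sum_add_distrib,
            StembridgeAux.ite_sum S P.root k hkS, ← he, h]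
          simp
        have := StembridgeAux.coeff_eq S P.root hbaseInd _ _ heq k hkS
        rw [if_pos rfl] at this
        have hcnn : (0:ℝ) ≤ (e k : ℝ) := Nat.cast_nonneg _
        linarith [this]
      obtain ⟨j', hj'⟩ := StembridgeAux.sum_is_root P hcrys hred j k hkneg hjk
      have hnewc : lam - P.root j'
          = ∑ i ∈ S, ((c i - if i = k then 1 else 0 : ℕ) : ℝ) • P.root i := by
        rw [sum_sub_single c k hkS hck, ← hc, hj']
        abel
      have hnewe : P.root j'
          = ∑ i ∈ S, ((e i + if i = k then 1 else 0 : ℕ) : ℝ) • P.root i := by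
        rw [sum_add_single e k hkS, ← he, hj']
      have hdec : ∑ i ∈ S, (c i - if i = k then 1 else 0) < n := by
        rw [← hn]
        refine Finset.sum_lt_sum (fun i _ => Nat.sub_le _ _) ⟨k, hkS, ?_⟩
        rw [if_pos rfl]
        omega
      exact IH _ hdec j' _ _ rfl hnewc hnewe

end Main



/-- Stembridge, Proposition 2.1: let `P` be a finite, reduced,
crystallographic, irreducible root pairing over `ℝ` with a base indexed by `S`
(linearly independent, and every root is a nonnegative or nonpositive integer
combination of the simple roots). Let `θ = P.root iθ` be a dominant root that is
minimal among dominant roots (every dominant root exceeds it by a nonnegative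
integer combination of simple roots, so `θ` is the short highest root). If `λ ≠ 0`
is dominant and a nonnegative integer combination of the simple roots, then so is
`λ - θ`. -/
theorem stmt_0 {ι M N : Type*} [Fintype ι]
    [AddCommGroup M] [Module ℝ M] [AddCommGroup N] [Module ℝ N]
    (P : RootPairing ι ℝ M N)
    (hcrys : P.IsCrystallographic)
    (hred : P.IsReduced)
    (hirr : ¬∃ s t : Set ι, s.Nonempty ∧ t.Nonempty ∧ s ∩ t = ∅ ∧ s ∪ t = Set.univ ∧
      ∀ i ∈ s, ∀ j ∈ t, P.pairing i j = 0)
    (S : Finset ι)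
    (hbaseInd : LinearIndependent ℝ fun i : S => P.root i)
    (hbase : ∀ j : ι, (∃ c : ι → ℕ, P.root j = ∑ i ∈ S, (c i : ℝ) • P.root i) ∨
      (∃ c : ι → ℕ, P.root j = -∑ i ∈ S, (c i : ℝ) • P.root i))
    (iθ : ι)
    (hθdom : ∀ i ∈ S, 0 ≤ P.pairing iθ i)
    (hθmin : ∀ j : ι, (∀ i ∈ S, 0 ≤ P.pairing j i) →
      ∃ c : ι → ℕ, P.root j - P.root iθ = ∑ i ∈ S, (c i : ℝ) • P.root i)
    (lam : M) (hlam0 : lam ≠ 0)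
    (hlamdom : ∀ i ∈ S, 0 ≤ P.toLinearMap lam (P.coroot i))
    (hlamsum : ∃ c : ι → ℕ, lam = ∑ i ∈ S, (c i : ℝ) • P.root i) :
    ∃ c : ι → ℕ, lam - P.root iθ = ∑ i ∈ S, (c i : ℝ) • P.root i := by
  exact stmt_0' P hcrys hred S hbaseInd hbase iθ hθmin lam hlam0 hlamdom hlamsum
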